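/- Let n ≥ 2 and let A be a nonsingular n×n 0–1 matrix with A⁻¹ ∈ {−α,α}^{n×n}, and suppose |det(A)| = 2^k for some integer k > 0. Then there exists an integer t with 0 ≤ t < k such that every minor of A of order n−1 has absolute value 2^t, and moreover |α| = 1/2^{k−t}. -/

import Mathlib

open Matrix Finset

theorem stmt5 {n : ℕ} (hn : 1 ≤ n) (A : Matrix (Fin (n + 1)) (Fin (n + 1)) ℝ)
    (hA : IsUnit A.det)
    (h01 : ∀ i j, A i j = 0 ∨ A i j = 1)
    (α : ℝ) (hequi : ∀ i j, A⁻¹ i j = α ∨ A⁻¹ i j = -α)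
    (k : ℕ) (hk : 0 < k) (hdet : |A.det| = 2 ^ k) :
    ∃ t : ℕ, t < k ∧
      (∀ i j : Fin (n + 1), |(A.submatrix i.succAbove j.succAbove).det| = 2 ^ t) ∧
      |α| = 1 / 2 ^ (k - t) := by
  have hdet0 : A.det ≠ 0 := hA.ne_zero
  -- α ≠ 0
  have hinv : A⁻¹ * A = 1 := nonsing_inv_mul A hA
  have hα : α ≠ 0 := by
    intro h0
    have hz : A⁻¹ = 0 := by
      ext i j
      rcases hequi i j with h | h <;> simp [h, h0]
    rw [hz, Matrix.zero_mul] at hinv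
    have := congrFun (congrFun hinv 0) 0
    simp [Matrix.one_apply] at this
  -- adjugate entries of A all have absolute value μ := 2^k * |α|
  set μ : ℝ := 2 ^ k * |α| with hμ
  have hadjA : ∀ i j, |adjugate A i j| = μ := by
    intro i j
    have h1 : adjugate A i j = A.det * A⁻¹ i j := by
      rw [Matrix.inv_def, Ring.inverse_eq_inv']
      simp [Matrix.smul_apply]
      field_simp
    rcases hequi i j with h | h <;> rw [h1, h] <;>
      simp [abs_mul, hdet, hμ]
  -- integer model B
  set B : Matrix (Fin (n + 1)) (Fin (n + 1)) ℤ :=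
    Matrix.of (fun i j => if A i j = 1 then 1 else 0) with hB
  have hAB : B.map (Int.cast : ℤ → ℝ) = A := by
    ext i j
    rcases h01 i j with h | h <;> simp [Matrix.map_apply, hB, h]
  have hBdet : ((B.det : ℤ) : ℝ) = A.det := by
    rw [← hAB]
    exact (RingHom.map_det (Int.castRingHom ℝ) B)
  have hBadj : ∀ i j, ((adjugate B i j : ℤ) : ℝ) = adjugate A i j := by
    intro i j
    rw [← hAB,
      show B.map (Int.cast : ℤ → ℝ) = (Int.castRingHom ℝ).mapMatrix B from rfl,
      ← RingHom.map_adjugate]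
    simp [RingHom.mapMatrix_apply, Matrix.map_apply]
  have hcast : ∀ i j, ((|adjugate B i j| : ℤ) : ℝ) = μ := by
    intro i j
    rw [Int.cast_abs, hBadj, hadjA]
  have hBdetabs : |B.det| = 2 ^ k := by
    have : ((|B.det| : ℤ) : ℝ) = ((2 ^ k : ℤ) : ℝ) := by
      rw [Int.cast_abs, hBdet, hdet]; push_cast; ring
    exact_mod_cast this
  -- m : the common absolute value of adjugate entries of B
  set m : ℤ := |adjugate B 0 0| with hm
  have hmall : ∀ i j, |adjugate B i j| = m := by
    intro i j
    have : ((|adjugate B i j| : ℤ) : ℝ) = ((m : ℤ) : ℝ) := by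
      rw [hcast, hm, hcast]
    exact_mod_cast this
  have hmpos : 0 < m := by
    have h1 : ((m : ℤ) : ℝ) = μ := by rw [hm, hcast]
    have h2 : 0 < μ := by
      rw [hμ]
      positivity
    rw [← h1] at h2
    exact_mod_cast h2
  -- m divides det B
  have hmdvd : m ∣ B.det := by
    have hmul := mul_adjugate B
    have h00 := congrFun (congrFun hmul 0) 0
    rw [Matrix.mul_apply] at h00
    simp [Matrix.smul_apply, Matrix.one_apply] at h00
    rw [← h00]
    refine Finset.dvd_sum fun j _ => ?_
    refine dvd_mul_of_dvd_right ?_ _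
    rw [← hmall j 0]
    exact (abs_dvd _ _).mpr dvd_rfl
  have hmdvd2 : m ∣ 2 ^ k := by
    rw [← hBdetabs]
    exact (dvd_abs _ _).mpr hmdvd
  have hmnat : m.toNat ∣ 2 ^ k := by
    have : ((m.toNat : ℕ) : ℤ) ∣ ((2 ^ k : ℕ) : ℤ) := by
      rw [Int.toNat_of_nonneg hmpos.le]; push_cast; exact hmdvd2
    exact_mod_cast this
  obtain ⟨t, htk, hmt⟩ := (Nat.dvd_prime_pow Nat.prime_two).mp hmnat
  have hmval : m = 2 ^ t := by
    rw [← Int.toNat_of_nonneg hmpos.le, hmt]; push_cast; ring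
  have hμval : μ = 2 ^ t := by
    have : ((m : ℤ) : ℝ) = μ := by rw [hm, hcast]
    rw [← this, hmval]; push_cast; ring
  -- t ≠ k
  have htne : t ≠ k := by
    intro hte
    subst hte
    -- all adjugate entries are ±2^t; factor out
    set S : Matrix (Fin (n + 1)) (Fin (n + 1)) ℤ :=
      Matrix.of (fun i j => if adjugate B i j = 2 ^ t then 1 else -1) with hSdef
    have hfac : adjugate B = (2 ^ t : ℤ) • S := by
      ext i j
      have h := hmall i j
      rw [hmval] at h
      rcases abs_eq (by positivity : (0:ℤ) ≤ 2 ^ t) |>.mp h with h' | h'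
      · simp [hSdef, h', Matrix.smul_apply]
      · have hne : adjugate B i j ≠ 2 ^ t := by
          rw [h']
          intro hc
          have : (2:ℤ) ^ t > 0 := by positivity
          omega
        rw [h', Matrix.smul_apply, hSdef]
        rw [Matrix.of_apply, if_neg (h' ▸ hne)]
        simp
    have hdadj : (adjugate B).det = B.det ^ n := by
      rw [det_adjugate]
      congr 1
      simp
    have hsmul : (adjugate B).det = (2 ^ t : ℤ) ^ (n + 1) * S.det := by
      rw [hfac, Matrix.det_smul]
      congr 2
      simp
    have habs : (2:ℤ) ^ (t * n) = 2 ^ (t * (n + 1)) * |S.det| := by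
      have h1 : |(adjugate B).det| = 2 ^ (t * n) := by
        rw [hdadj, abs_pow, hBdetabs, ← pow_mul]
      have h2 : |(adjugate B).det| = 2 ^ (t * (n + 1)) * |S.det| := by
        have hab : |((2:ℤ) ^ t) ^ (n + 1)| = 2 ^ (t * (n + 1)) := by
          rw [abs_of_nonneg (by positivity), ← pow_mul]
        rw [hsmul, abs_mul, hab]
      rw [← h1, h2]
    have hS0 : S.det ≠ 0 := by
      intro h0
      rw [h0] at habs
      simp at habs
    have hS1 : 1 ≤ |S.det| := Int.one_le_abs hS0
    have hle : (2:ℤ) ^ (t * (n + 1)) ≤ 2 ^ (t * n) := by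
      calc (2:ℤ) ^ (t * (n + 1)) = 2 ^ (t * (n + 1)) * 1 := by ring
        _ ≤ 2 ^ (t * (n + 1)) * |S.det| := by
            apply mul_le_mul_of_nonneg_left hS1 (by positivity)
        _ = 2 ^ (t * n) := habs.symm
    have hlt : t * n < t * (n + 1) := by nlinarith [hk]
    have h2lt : (2:ℤ) ^ (t * n) < 2 ^ (t * (n + 1)) :=
      pow_lt_pow_right₀ (by norm_num) hlt
    linarith
  have htlt : t < k := lt_of_le_of_ne htk htne
  refine ⟨t, htlt, ?_, ?_⟩
  · intro i j
    have h := hadjA j i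
    rw [adjugate_fin_succ_eq_det_submatrix] at h
    rw [abs_mul, abs_pow, abs_neg, abs_one, one_pow, one_mul] at h
    rw [h, hμval]
  · have h1 : (2:ℝ) ^ (k - t) * 2 ^ t = 2 ^ k := by
      rw [← pow_add]
      congr 1
      omega
    have h2 : 2 ^ k * |α| = 2 ^ t := by rw [← hμ, hμval]
    have hp : (0:ℝ) < 2 ^ (k - t) := by positivity
    have h3 : |α| = 2 ^ t / 2 ^ k := by
      field_simp at h2 ⊢
      linarith
    rw [h3, ← h1]
    field_simp
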